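/- arXiv:2509.08284 — 2 statements merged into one kernel-verified Lean document; each statement's English description precedes it below -/
import Mathlib

section
/- For vectors a₁, a₂ ∈ ℝ³ with |a₁| ≤ 1 and |a₂| ≤ 1, the pair of unbiased qubit observables A^{a₁}(±) = (1 ± a₁·σ)/2 and A^{a₂}(±) = (1 ± a₂·σ)/2 admits a joint POVM (i.e., a POVM G on {+,-}×{+,-} with G(x,+)+G(x,-) = A^{a₁}(x) and G(+,y)+G(-,y) = A^{a₂}(y)) if |a₁ + a₂| + |a₁ - a₂| ≤ 2. -/
open Matrix ComplexOrder

noncomputable def σx : Matrix (Fin 2) (Fin 2) ℂ := !![0, 1; 1, 0]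
noncomputable def σy : Matrix (Fin 2) (Fin 2) ℂ := !![0, -Complex.I; Complex.I, 0]
noncomputable def σz : Matrix (Fin 2) (Fin 2) ℂ := !![1, 0; 0, -1]

/-- `a · σ` for a Bloch vector `a ∈ ℝ³`. -/
noncomputable def dotSigma (a : EuclideanSpace ℝ (Fin 3)) : Matrix (Fin 2) (Fin 2) ℂ :=
  (a 0 : ℂ) • σx + (a 1 : ℂ) • σy + (a 2 : ℂ) • σz

/-- The unbiased qubit observable `A^a(±) = (𝟙 ± a·σ)/2`. -/
noncomputable def ubObs (a : EuclideanSpace ℝ (Fin 3)) : Bool → Matrix (Fin 2) (Fin 2) ℂ :=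
  fun b => (1/2 : ℂ) • ((1 : Matrix (Fin 2) (Fin 2) ℂ) + (if b then (1:ℂ) else -1) • dotSigma a)

noncomputable def M2 (c b1 b2 b3 : ℝ) : Matrix (Fin 2) (Fin 2) ℂ :=
  !![(c + b3 : ℂ), b1 - b2*Complex.I; b1 + b2*Complex.I, c - b3]

lemma quad {c b1 b2 b3 p q r s : ℝ} (hc : 0 ≤ c) (hb : b1^2 + b2^2 + b3^2 ≤ c^2) :
    0 ≤ (c+b3)*(p^2+q^2) + (c-b3)*(r^2+s^2) + 2*b1*(p*r+q*s) + 2*b2*(p*s-q*r) := by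
  have key : 0 ≤ 2*c*((c+b3)*(p^2+q^2) + (c-b3)*(r^2+s^2) + 2*b1*(p*r+q*s) + 2*b2*(p*s-q*r)) := by
    nlinarith [sq_nonneg ((c+b3)*p + b1*r + b2*s), sq_nonneg ((c+b3)*q + b1*s - b2*r),
      sq_nonneg ((c-b3)*r + b1*p - b2*q), sq_nonneg ((c-b3)*s + b1*q + b2*p),
      mul_nonneg (sub_nonneg.2 hb) (add_nonneg (sq_nonneg r) (sq_nonneg s)),
      mul_nonneg (sub_nonneg.2 hb) (add_nonneg (sq_nonneg p) (sq_nonneg q))]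
  rcases hc.eq_or_lt with hc0 | hc0
  · have h1 : b1 = 0 := by nlinarith [sq_nonneg b1, sq_nonneg b2, sq_nonneg b3]
    have h2 : b2 = 0 := by nlinarith [sq_nonneg b1, sq_nonneg b2, sq_nonneg b3]
    have h3 : b3 = 0 := by nlinarith [sq_nonneg b1, sq_nonneg b2, sq_nonneg b3]
    simp [← hc0, h1, h2, h3]
  · by_contra hF
    push_neg at hF
    nlinarith [key]

lemma psd_aux {c b1 b2 b3 : ℝ} (hc : 0 ≤ c) (hb : b1^2 + b2^2 + b3^2 ≤ c^2) :
    (M2 c b1 b2 b3).PosSemidef := by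
  rw [Matrix.posSemidef_iff_dotProduct_mulVec]
  constructor
  · ext i j
    fin_cases i <;> fin_cases j <;>
      simp [M2, Matrix.IsHermitian, conjTranspose_apply, Complex.ext_iff]
  · intro x
    have hform : dotProduct (star x) (M2 c b1 b2 b3 *ᵥ x) =
        (starRingEnd ℂ (x 0)) * ((c + b3) * x 0 + (b1 - b2*Complex.I) * x 1) +
        (starRingEnd ℂ (x 1)) * ((b1 + b2*Complex.I) * x 0 + (c - b3) * x 1) := by
      simp [dotProduct, mulVec, M2, Fin.sum_univ_two, mul_comm]
    rw [hform, Complex.le_def]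
    obtain ⟨p, q⟩ := x 0
    obtain ⟨r, s⟩ := x 1
    constructor
    · simp only [Complex.zero_re, Complex.add_re, Complex.mul_re, Complex.mul_im,
        Complex.add_im, Complex.sub_re, Complex.sub_im, Complex.ofReal_re, Complex.ofReal_im,
        Complex.I_re, Complex.I_im, Complex.conj_re, Complex.conj_im]
      nlinarith [quad (c := c) (b1 := b1) (b2 := b2) (b3 := b3) (p := p) (q := q) (r := r) (s := s) hc hb]
    · simp [Complex.ext_iff, Complex.mul_re, Complex.mul_im]
      ring

lemma M2_congr {c b1 b2 b3 c' b1' b2' b3' : ℝ} (h0 : c = c') (h1 : b1 = b1')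
    (h2 : b2 = b2') (h3 : b3 = b3') : M2 c b1 b2 b3 = M2 c' b1' b2' b3' := by
  rw [h0, h1, h2, h3]

lemma M2_add (c b1 b2 b3 c' b1' b2' b3' : ℝ) :
    M2 c b1 b2 b3 + M2 c' b1' b2' b3' = M2 (c+c') (b1+b1') (b2+b2') (b3+b3') := by
  ext i j
  fin_cases i <;> fin_cases j <;> simp [M2] <;> ring

lemma M2_one : M2 1 0 0 0 = 1 := by
  ext i j
  fin_cases i <;> fin_cases j <;> simp [M2, Matrix.one_apply]

lemma ubObs_eq (a : EuclideanSpace ℝ (Fin 3)) (b : Bool) :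
    ubObs a b = M2 (1/2) ((if b then (1:ℝ) else -1) * a 0 / 2)
      ((if b then (1:ℝ) else -1) * a 1 / 2) ((if b then (1:ℝ) else -1) * a 2 / 2) := by
  ext i j
  fin_cases i <;> fin_cases j <;> cases b <;>
    · simp [ubObs, dotSigma, M2, σx, σy, σz, Matrix.one_apply]
      push_cast
      ring

lemma norm_sq_eq (v : EuclideanSpace ℝ (Fin 3)) :
    (v 0)^2 + (v 1)^2 + (v 2)^2 = ‖v‖^2 := by
  rw [EuclideanSpace.norm_eq, Real.sq_sqrt (by positivity)]
  simp [Fin.sum_univ_three, sq_abs]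

/-- If `|a₁ + a₂| + |a₁ − a₂| ≤ 2` then the pair of unbiased qubit observables
`A^{a₁}, A^{a₂}` admits a joint POVM. -/
theorem stmt0 (a₁ a₂ : EuclideanSpace ℝ (Fin 3)) (h₁ : ‖a₁‖ ≤ 1) (h₂ : ‖a₂‖ ≤ 1)
    (h : ‖a₁ + a₂‖ + ‖a₁ - a₂‖ ≤ 2) :
    ∃ G : Bool → Bool → Matrix (Fin 2) (Fin 2) ℂ,
      (∀ x y, (G x y).PosSemidef) ∧
      (∑ x : Bool, ∑ y : Bool, G x y) = 1 ∧
      (∀ x, G x true + G x false = ubObs a₁ x) ∧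
      (∀ y, G true y + G false y = ubObs a₂ y) := by
  classical
  set α : ℝ := ‖a₁ + a₂‖ - 1 with hα
  set s : Bool → ℝ := fun b => if b then 1 else -1 with hs
  have hp : ‖a₁ + a₂‖^2 = (a₁ 0 + a₂ 0)^2 + (a₁ 1 + a₂ 1)^2 + (a₁ 2 + a₂ 2)^2 := by
    rw [← norm_sq_eq]; simp [PiLp.add_apply]
  have hm : ‖a₁ - a₂‖^2 = (a₁ 0 - a₂ 0)^2 + (a₁ 1 - a₂ 1)^2 + (a₁ 2 - a₂ 2)^2 := by
    rw [← norm_sq_eq]; simp [PiLp.sub_apply]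
  have hpn : (0:ℝ) ≤ ‖a₁ + a₂‖ := norm_nonneg _
  have hmn : (0:ℝ) ≤ ‖a₁ - a₂‖ := norm_nonneg _
  refine ⟨fun x y => M2 ((1 + s x * s y * α)/4)
      ((s x * a₁ 0 + s y * a₂ 0)/4) ((s x * a₁ 1 + s y * a₂ 1)/4) ((s x * a₁ 2 + s y * a₂ 2)/4),
    ?_, ?_, ?_, ?_⟩
  · intro x y
    apply psd_aux
    · cases x <;> cases y <;> simp [s, α] <;> linarith
    · cases x <;> cases y <;> simp [s, α] <;> nlinarith [hp, hm, h, hpn, hmn]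
  · simp only [Fintype.sum_bool]
    rw [M2_add, M2_add, M2_add, ← M2_one]
    apply M2_congr <;> simp [s] <;> ring
  · intro x
    rw [M2_add, ubObs_eq]
    apply M2_congr <;> cases x <;> simp [s] <;> ring
  · intro y
    rw [M2_add, ubObs_eq]
    apply M2_congr <;> cases y <;> simp [s] <;> ring
end

section
/- Let A = {A₁,…,Aₙ} be POVMs with outcome set X and S₀ = {ρ₁,…,ρ_m} states. The family A is S₀-compatible if and only if there exist a POVM M = {M(z)}_z and conditional probability distributions h(·|i,z) on X such that Tr[ρ_j A_i(x)] = Σ_z Tr[ρ_j M(z)] h(x|i,z) for all x, i, j. -/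
open Matrix ComplexOrder

/-- A POVM on a finite outcome set. -/
def IsPOVM {d Z : Type} [Fintype d] [DecidableEq d] [Fintype Z] (M : Z → Matrix d d ℂ) : Prop :=
  (∀ z, (M z).PosSemidef) ∧ ∑ z, M z = 1

/-- A family of `n` POVMs with common outcome set `X` is compatible if it admits a
joint POVM on `Xⁿ` whose marginals are the members. -/
def Compatible {d X : Type} [Fintype d] [DecidableEq d] [Fintype X] [DecidableEq X] {n : ℕ}
    (A : Fin n → X → Matrix d d ℂ) : Prop :=
  ∃ G : (Fin n → X) → Matrix d d ℂ, IsPOVM G ∧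
    ∀ i x, A i x = ∑ f ∈ Finset.univ.filter (fun f : Fin n → X => f i = x), G f

/-- Nonnegative real scalar multiples of PSD matrices are PSD. -/
lemma psd_smul' {d : Type} [Fintype d] [DecidableEq d] {M : Matrix d d ℂ} (hM : M.PosSemidef)
    {c : ℝ} (hc : 0 ≤ c) : ((c : ℂ) • M).PosSemidef := by
  constructor
  · unfold Matrix.IsHermitian
    rw [conjTranspose_smul, hM.1]
    norm_num
  · exact (hM.smul (a := (c : ℂ)) (by exact_mod_cast hc)).2

/-- Sum over all functions of a product of probabilities is one. -/
lemma sum_prod_one' {n : ℕ} {X : Type} [Fintype X] [DecidableEq X]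
    (p : X → Fin n → ℝ) (hp : ∀ k, ∑ y, p y k = 1) :
    ∑ f : Fin n → X, ∏ k, p (f k) k = 1 := by
  rw [← Fintype.prod_sum (f := fun (k : Fin n) y => p y k)]
  simp [hp]

/-- Marginalizing a product distribution. -/
lemma marg' {n : ℕ} {X : Type} [Fintype X] [DecidableEq X] (i : Fin n) (x : X)
    (p : X → Fin n → ℝ) (hp : ∀ k, ∑ y, p y k = 1) :
    ∑ f ∈ Finset.univ.filter (fun f : Fin n → X => f i = x), ∏ k, p (f k) k = p x i := by
  rw [Finset.sum_filter,
    ← Equiv.sum_comp (Equiv.funSplitAt i X).symm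
      (fun f => if f i = x then ∏ k, p (f k) k else 0), Fintype.sum_prod_type]
  simp only [Equiv.funSplitAt_symm_apply, dif_pos rfl]
  rw [Finset.sum_comm]
  simp only [dite_true, Finset.sum_ite_eq' Finset.univ x]
  simp only [Finset.mem_univ, if_true]
  have key : ∀ y : { j // j ≠ i } → X,
      (∏ k : Fin n, p (if h : k = i then x else y ⟨k, h⟩) k) =
      p x i * ∏ k : { j // j ≠ i }, p (y k) k := by
    intro y
    rw [← Finset.mul_prod_erase Finset.univ _ (Finset.mem_univ i), dif_pos rfl]
    congr 1
    rw [Finset.prod_subtype (p := fun k => k ≠ i) (Finset.univ.erase i)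
      (fun k => by simp [Finset.mem_erase])
      (fun k => p (if h : k = i then x else y ⟨k, h⟩) k)]
    exact Finset.prod_congr rfl fun k _ => by rw [dif_neg k.2]
  simp only [key, ← Finset.mul_sum]
  rw [← Fintype.prod_sum (f := fun (k : { j // j ≠ i }) y => p y (k : Fin n))]
  simp [hp]

/-- `S₀`-compatibility and CC-realizability coincide: the family `A` is
`S₀`-compatible for `S₀ = {ρ₁,…,ρ_m}` iff there exist a POVM `M` and conditional
probability distributions `h(·|i,z)` reproducing the statistics of `A` on `S₀`. -/
theorem stmt17 {d X : Type} [Fintype d] [DecidableEq d] [Fintype X] [DecidableEq X]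
    {n m : ℕ} (A : Fin n → X → Matrix d d ℂ) (hA : ∀ i, IsPOVM (A i))
    (ρ : Fin m → Matrix d d ℂ) :
    (∃ B : Fin n → X → Matrix d d ℂ, Compatible B ∧
      ∀ (j : Fin m) (i : Fin n) (x : X), (ρ j * B i x).trace = (ρ j * A i x).trace) ↔
    (∃ (Z : Type) (_ : Fintype Z) (_ : DecidableEq Z) (M : Z → Matrix d d ℂ)
      (h : X → Fin n → Z → ℝ), IsPOVM M ∧
      (∀ x i z, 0 ≤ h x i z) ∧ (∀ i z, ∑ x : X, h x i z = 1) ∧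
      ∀ (x : X) (i : Fin n) (j : Fin m),
        (ρ j * A i x).trace = ∑ z, (ρ j * M z).trace * (h x i z : ℂ)) := by
  constructor
  · rintro ⟨B, ⟨G, hG, hGmarg⟩, hBA⟩
    refine ⟨Fin n → X, inferInstance, inferInstance, G,
      fun x i z => if z i = x then 1 else 0, hG, ?_, ?_, ?_⟩
    · intro x i z; dsimp only; split_ifs <;> norm_num
    · intro i z; simp
    · intro x i j
      rw [← hBA j i x, hGmarg i x, Finset.mul_sum, trace_sum, Finset.sum_filter]
      refine Finset.sum_congr rfl fun z _ => ?_
      by_cases hz : z i = x <;> simp [hz]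
  · rintro ⟨Z, _, _, M, h, ⟨hMpsd, hMsum⟩, hpos, hsum1, htr⟩
    refine ⟨fun i x => ∑ z, ((h x i z : ℝ) : ℂ) • M z,
      ⟨fun f => ∑ z, ((∏ k, h (f k) k z : ℝ) : ℂ) • M z, ⟨?_, ?_⟩, ?_⟩, ?_⟩
    · intro f
      refine Finset.sum_induction _ _ (fun a b ha hb => ha.add hb) Matrix.PosSemidef.zero
        fun z _ => psd_smul' (hMpsd z) (Finset.prod_nonneg fun k _ => hpos (f k) k z)
    · rw [Finset.sum_comm]
      have : ∀ z, ∑ f : Fin n → X, ((∏ k, h (f k) k z : ℝ) : ℂ) • M z = M z := by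
        intro z
        rw [← Finset.sum_smul, ← Complex.ofReal_sum,
          sum_prod_one' (fun y k => h y k z) (fun k => hsum1 k z)]
        simp
      simp only [this, hMsum]
    · intro i x
      rw [Finset.sum_comm]
      refine Finset.sum_congr rfl fun z _ => ?_
      rw [← Finset.sum_smul, ← Complex.ofReal_sum,
        marg' i x (fun y k => h y k z) (fun k => hsum1 k z)]
    · intro j i x
      rw [Finset.mul_sum, trace_sum, htr x i j]
      refine Finset.sum_congr rfl fun z _ => ?_
      rw [Matrix.mul_smul, trace_smul, smul_eq_mul, mul_comm]
end
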